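/- Let k be a field of characteristic zero, R = k[x,y], and d = y^m ∂_x + (1 - x^α y) ∂_y with integers m ≥ 2 and α ≥ 1. If r ∈ R satisfies d(r) = a x + b for some a, b ∈ k, then r ∈ k and a = b = 0. -/

import Mathlib

set_option linter.unusedSectionVars false
set_option linter.unusedVariables false

open Polynomial Finset

namespace Stmt0Aux

variable {k : Type*} [Field k] [CharZero k]

/-- double coefficient of a polynomial in k[x][y] : coefficient of x^i y^j -/
noncomputable def dc (r : Polynomial (Polynomial k)) (i j : ℕ) : k := (r.coeff j).coeff i

lemma dc_add (r s : Polynomial (Polynomial k)) (i j : ℕ) :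
    dc (r + s) i j = dc r i j + dc s i j := by simp [dc]

lemma dc_sub (r s : Polynomial (Polynomial k)) (i j : ℕ) :
    dc (r - s) i j = dc r i j - dc s i j := by simp [dc]

lemma dc_smul (c : k) (r : Polynomial (Polynomial k)) (i j : ℕ) :
    dc (c • r) i j = c * dc r i j := by simp [dc]

/-- weighted degree bound: all coefficients beyond weight W vanish, weights w(x)=m, w(y)=α+1 -/
def WtB (m α W : ℕ) (r : Polynomial (Polynomial k)) : Prop :=
  ∀ i j : ℕ, W < m * i + (α+1) * j → dc r i j = 0

lemma WtB.mono {m α W W' : ℕ} {r : Polynomial (Polynomial k)} (h : WtB m α W r)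
    (hWW : W ≤ W') : WtB m α W' r := fun i j hij => h i j (lt_of_le_of_lt hWW hij)

lemma WtB.add {m α W : ℕ} {r s : Polynomial (Polynomial k)} (hr : WtB m α W r)
    (hs : WtB m α W s) : WtB m α W (r + s) := fun i j hij => by
  rw [dc_add, hr i j hij, hs i j hij, add_zero]

lemma WtB.smul {m α W : ℕ} {r : Polynomial (Polynomial k)} (hr : WtB m α W r) (c : k) :
    WtB m α W (c • r) := fun i j hij => by rw [dc_smul, hr i j hij, mul_zero]

lemma WtB.mul {m α A B : ℕ} {r s : Polynomial (Polynomial k)} (hr : WtB m α A r)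
    (hs : WtB m α B s) : WtB m α (A + B) (r * s) := by
  intro i j hij
  unfold dc
  rw [coeff_mul, finset_sum_coeff]
  refine Finset.sum_eq_zero fun p hp => ?_
  rw [coeff_mul]
  refine Finset.sum_eq_zero fun q hq => ?_
  have hp' : p.1 + p.2 = j := Finset.HasAntidiagonal.mem_antidiagonal.mp hp
  have hq' : q.1 + q.2 = i := Finset.HasAntidiagonal.mem_antidiagonal.mp hq
  have key : (m * q.1 + (α+1) * p.1) + (m * q.2 + (α+1) * p.2) = m * i + (α+1) * j := by
    rw [← hp', ← hq']; ring
  rcases le_or_gt (m * q.1 + (α+1) * p.1) A with h1 | h1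
  · have h2 : B < m * q.2 + (α+1) * p.2 := by omega
    have := hs q.2 p.2 h2
    rw [dc] at this
    rw [this, mul_zero]
  · have := hr q.1 p.1 h1
    rw [dc] at this
    rw [this, zero_mul]

lemma wtB_CC (m α : ℕ) (c : k) : WtB m α 0 (C (C c) : Polynomial (Polynomial k)) := by
  intro i j hij
  unfold dc
  rcases Nat.eq_zero_or_pos j with rfl | hj
  · rcases Nat.eq_zero_or_pos i with rfl | hi
    · simp at hij
    · rw [coeff_C_zero, coeff_C, if_neg (by omega)]
  · rw [coeff_C, if_neg (by omega), coeff_zero]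

lemma wtB_one (m α : ℕ) : WtB m α 0 (1 : Polynomial (Polynomial k)) := by
  have := wtB_CC m α (1:k)
  simpa using this

lemma wtB_X (m α : ℕ) : WtB m α (α+1) (X : Polynomial (Polynomial k)) := by
  intro i j hij
  unfold dc
  rw [coeff_X]
  by_cases hj : 1 = j
  · subst hj
    by_cases hi : i = 0
    · subst hi; simp at hij
    · rw [if_pos rfl, coeff_one, if_neg hi]
  · rw [if_neg hj, coeff_zero]

lemma wtB_CX (m α : ℕ) : WtB m α m (C X : Polynomial (Polynomial k)) := by
  intro i j hij
  unfold dc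
  rw [coeff_C]
  by_cases hj : j = 0
  · subst hj
    by_cases hi : 1 = i
    · subst hi; simp at hij
    · rw [if_pos rfl, coeff_X, if_neg hi]
  · rw [if_neg hj, coeff_zero]

lemma WtB.pow {m α A : ℕ} {r : Polynomial (Polynomial k)} (hr : WtB m α A r) (n : ℕ) :
    WtB m α (n * A) (r ^ n) := by
  induction n with
  | zero => rw [pow_zero, Nat.zero_mul]; exact wtB_one m α
  | succ n ih =>
      rw [pow_succ]
      exact (ih.mul hr).mono (le_of_eq (Nat.succ_mul n A).symm)

lemma exists_wtB (m α : ℕ) (r : Polynomial (Polynomial k)) :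
    ∃ W, WtB m α W r := by
  induction r using Polynomial.induction_on' with
  | add p q hp hq =>
      obtain ⟨Wp, hWp⟩ := hp
      obtain ⟨Wq, hWq⟩ := hq
      exact ⟨max Wp Wq, (hWp.mono (le_max_left _ _)).add (hWq.mono (le_max_right _ _))⟩
  | monomial n p =>
      refine ⟨m * p.natDegree + (α+1) * n, fun i j hij => ?_⟩
      unfold dc
      rw [coeff_monomial]
      by_cases hj : n = j
      · subst hj
        rw [if_pos rfl]
        apply coeff_eq_zero_of_natDegree_lt
        by_contra hc
        push_neg at hc
        have : m * i ≤ m * p.natDegree := Nat.mul_le_mul_left m hc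
        omega
      · rw [if_neg hj, coeff_zero]
variable {k : Type*} [Field k] [CharZero k]

noncomputable def F (k : Type*) [Field k] (m α : ℕ) : Polynomial (Polynomial k) :=
  C (Polynomial.C (m:k)) * (C X)^(α+1) + C (Polynomial.C ((α+1:ℕ):k)) * X^m

noncomputable def val (k : Type*) [Field k] (m α s t : ℕ) : Polynomial k :=
  Polynomial.C (((s.choose t) * m^(s-t) * (α+1)^t : ℕ) : k) * X^((α+1)*(s-t))

lemma F_pow_eq (m α s : ℕ) :
    (F k m α)^s = ∑ u ∈ range (s+1), (monomial ((s-u)*m)) (val k m α s (s-u)) := by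
  rw [F, add_pow]
  refine Finset.sum_congr rfl fun u hu => ?_
  have hu' : u ≤ s := Nat.lt_succ_iff.mp (Finset.mem_range.mp hu)
  rw [val, ← C_mul_X_pow_eq_monomial]
  rw [Nat.choose_symm hu', Nat.sub_sub_self hu']
  rw [show (s-u)*m = m*(s-u) from Nat.mul_comm _ _]
  simp only [map_mul, map_pow, map_natCast, Nat.cast_mul, Nat.cast_pow, mul_pow, ← pow_mul]
  ring

lemma F_pow_coeff_tm (m α : ℕ) (hm : 1 ≤ m) {s t : ℕ} (ht : t ≤ s) :
    ((F k m α)^s).coeff (t*m) = val k m α s t := by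
  rw [F_pow_eq, finset_sum_coeff]
  rw [Finset.sum_eq_single (s - t)]
  · rw [coeff_monomial, Nat.sub_sub_self ht, if_pos rfl]
  · intro u hu hne
    rw [coeff_monomial, if_neg]
    intro hc
    have hu' : u ≤ s := Nat.lt_succ_iff.mp (Finset.mem_range.mp hu)
    have : s - u = t := Nat.eq_of_mul_eq_mul_right hm hc
    omega
  · intro hc
    exact absurd (Finset.mem_range.mpr (by omega)) hc

lemma F_pow_coeff_ne (m α : ℕ) {s j : ℕ} (h : ∀ t, t ≤ s → j ≠ t*m) :
    ((F k m α)^s).coeff j = 0 := by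
  rw [F_pow_eq, finset_sum_coeff]
  refine Finset.sum_eq_zero fun u hu => ?_
  rw [coeff_monomial, if_neg]
  intro hc
  have hu' : u ≤ s := Nat.lt_succ_iff.mp (Finset.mem_range.mp hu)
  exact h (s-u) (by omega) hc.symm

/-- dc value of F^s at its pattern points -/
lemma dc_F_pow_pat (m α : ℕ) (hm : 1 ≤ m) {s t : ℕ} (ht : t ≤ s) :
    dc ((F k m α)^s) ((α+1)*(s-t)) (t*m) = (((s.choose t) * m^(s-t) * (α+1)^t : ℕ) : k) := by
  rw [dc, F_pow_coeff_tm m α hm ht, val, coeff_C_mul, coeff_X_pow, if_pos rfl, mul_one]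

/-- dc of F^s vanishes off its pattern points -/
lemma dc_F_pow_ne (m α : ℕ) (hm : 1 ≤ m) {s i j : ℕ}
    (h : ∀ t, t ≤ s → ¬(j = t*m ∧ i = (α+1)*(s-t))) :
    dc ((F k m α)^s) i j = 0 := by
  by_cases hj : ∃ t, t ≤ s ∧ j = t*m
  · obtain ⟨t, ht, rfl⟩ := hj
    rw [dc, F_pow_coeff_tm m α hm ht, val, coeff_C_mul, coeff_X_pow, if_neg, mul_zero]
    intro hc
    exact h t ht ⟨rfl, hc⟩
  · push_neg at hj
    rw [dc, F_pow_coeff_ne m α hj, coeff_zero]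

/-- weight bound for F -/
lemma wtB_F (m α : ℕ) : WtB m α (m*(α+1)) (F k m α) := by
  rw [F]
  have h1 : WtB m α (0 + (α+1)*m) (C (Polynomial.C ((m:ℕ):k)) * (C X)^(α+1)) :=
    (wtB_CC m α _).mul ((wtB_CX m α).pow (α+1))
  have h2 : WtB m α (0 + m*(α+1)) (C (Polynomial.C ((α+1:ℕ):k)) * X^m) :=
    (wtB_CC m α _).mul ((wtB_X m α).pow m)
  exact (h1.mono (by ring_nf; omega)).add (h2.mono (by omega))

lemma wtB_F_pow (m α s : ℕ) : WtB m α (s*(m*(α+1))) ((F k m α)^s) :=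
  (wtB_F m α).pow s


variable {m α : ℕ} {d : Derivation k (Polynomial (Polynomial k)) (Polynomial (Polynomial k))}

lemma d_C_eq (hdx : d (C X) = X^m) (p : Polynomial k) :
    d (C p) = C (derivative p) * X ^ m := by
  induction p using Polynomial.induction_on' with
  | add f g hf hg => rw [map_add, map_add, derivative_add, map_add, add_mul, hf, hg]
  | monomial n a =>
      have h1 : (C ((monomial n) a) : Polynomial (Polynomial k)) = C (Polynomial.C a) * (C X)^n := by
        rw [← C_mul_X_pow_eq_monomial, map_mul, map_pow]
      have h2 : (C (Polynomial.C a) : Polynomial (Polynomial k)) = algebraMap k _ a := by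
        simp [Polynomial.algebraMap_apply]
      rw [h1, Derivation.leibniz, Derivation.leibniz_pow, h2, Derivation.map_algebraMap,
        smul_zero, add_zero, hdx]
      rw [derivative_monomial, ← C_mul_X_pow_eq_monomial, map_mul, map_pow]
      simp only [smul_eq_mul, nsmul_eq_mul, map_mul, map_natCast]
      rw [← h2]
      ring

/-- derivative with respect to the inner variable x -/
noncomputable def Dx (r : Polynomial (Polynomial k)) : Polynomial (Polynomial k) :=
  r.sum fun n p => C (derivative p) * X^n

lemma Dx_coeff (r : Polynomial (Polynomial k)) (n : ℕ) :
    (Dx r).coeff n = derivative (r.coeff n) := by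
  rw [Dx, Polynomial.sum_def, finset_sum_coeff]
  rw [Finset.sum_eq_single n]
  · rw [C_mul_X_pow_eq_monomial, coeff_monomial, if_pos rfl]
  · intro a ha hne
    rw [C_mul_X_pow_eq_monomial, coeff_monomial, if_neg hne]
  · intro hn
    rw [Polynomial.notMem_support_iff.mp hn, derivative_zero, C_0, zero_mul, coeff_zero]

lemma Dx_add (r s : Polynomial (Polynomial k)) : Dx (r + s) = Dx r + Dx s := by
  ext n
  simp [Dx_coeff]

lemma Dx_monomial (n : ℕ) (p : Polynomial k) :
    Dx (monomial n p) = C (derivative p) * X^n := by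
  rw [Dx, Polynomial.sum_monomial_index]
  rw [derivative_zero, C_0, zero_mul]

lemma d_apply (hdx : d (C X) = X^m) (hdy : d X = 1 - (C X)^α * X)
    (r : Polynomial (Polynomial k)) :
    d r = X^m * Dx r + (1 - (C X)^α * X) * derivative r := by
  induction r using Polynomial.induction_on' with
  | add f g hf hg => rw [map_add, hf, hg, Dx_add, derivative_add]; ring
  | monomial n p =>
      have h1 : ((monomial n) p : Polynomial (Polynomial k)) = C p * X^n := by
        rw [← C_mul_X_pow_eq_monomial]
      rw [h1, Derivation.leibniz, Derivation.leibniz_pow, hdy, d_C_eq hdx,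
        ← h1, Dx_monomial, derivative_monomial, ← C_mul_X_pow_eq_monomial]
      simp only [smul_eq_mul, nsmul_eq_mul, map_mul, map_natCast]
      ring

/-- the system of coefficient equations corresponding to d r = rhs -/
def Weq (m α : ℕ) (r rhs : Polynomial (Polynomial k)) : Prop :=
  ∀ i j : ℕ, (if m ≤ j then dc r (i+1) (j-m) * ((i:k)+1) else 0)
    + dc r i (j+1) * ((j:k)+1)
    - (if α ≤ i then dc r (i-α) j * (j:k) else 0) = dc rhs i j

lemma coeff_X_mul_der (r : Polynomial (Polynomial k)) (j : ℕ) :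
    (X * derivative r).coeff j = r.coeff j * Polynomial.C (j:k) := by
  cases j with
  | zero => rw [mul_coeff_zero, coeff_X_zero, zero_mul]; simp
  | succ j =>
      rw [coeff_X_mul, coeff_derivative, map_natCast]
      push_cast
      ring

lemma weq_of (hdx : d (C X) = X^m) (hdy : d X = 1 - (C X)^α * X)
    {r rhs : Polynomial (Polynomial k)} (hr : d r = rhs) : Weq m α r rhs := by
  intro i j
  rw [← hr, d_apply hdx hdy]
  have e1 : (X^m * Dx r).coeff j = if m ≤ j then derivative (r.coeff (j-m)) else 0 := by
    rw [mul_comm, coeff_mul_X_pow', Dx_coeff]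
  have e2 : ((1 - (C X)^α * X) * derivative r).coeff j
      = r.coeff (j+1) * Polynomial.C ((j:k)+1)
        - X^α * (r.coeff j * Polynomial.C (j:k)) := by
    rw [sub_mul, one_mul, coeff_sub, coeff_derivative]
    refine congrArg₂ (· - ·) ?_ ?_
    · rw [map_add, map_natCast, map_one]
    · rw [← map_pow, mul_assoc, coeff_C_mul, coeff_X_mul_der]
  have e0 : dc (X ^ m * Dx r + (1 - C X ^ α * X) * derivative r) i j
      = ((X^m * Dx r).coeff j).coeff i + (((1 - (C X)^α * X) * derivative r).coeff j).coeff i := by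
    rw [dc, coeff_add, coeff_add]
  rw [e0, e1, e2, coeff_sub, add_sub_assoc]
  congr 1
  · rw [apply_ite (fun q : Polynomial k => q.coeff i), coeff_zero]
    split
    · rw [coeff_derivative, dc]
    · rfl
  · congr 1
    · rw [coeff_mul_C, dc]
    · rw [mul_comm (X^α : Polynomial k), coeff_mul_X_pow']
      split
      · rw [coeff_mul_C, dc]
      · rfl



lemma dc_sum {s : Finset ℕ} (f : ℕ → Polynomial (Polynomial k)) (i j : ℕ) :
    dc (∑ x ∈ s, f x) i j = ∑ x ∈ s, dc (f x) i j := by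
  unfold dc
  rw [finset_sum_coeff, finset_sum_coeff]

lemma wtB_finsetSum {W : ℕ} {s : Finset ℕ} {f : ℕ → Polynomial (Polynomial k)}
    (h : ∀ x ∈ s, WtB m α W (f x)) : WtB m α W (∑ x ∈ s, f x) := by
  intro i j hij
  rw [dc_sum]
  exact Finset.sum_eq_zero fun x hx => h x hx i j hij

lemma d_F (hm : 1 ≤ m) (hdx : d (C X) = X^m) (hdy : d X = 1 - (C X)^α * X) :
    d (F k m α) = C (Polynomial.C ((m*(α+1) : ℕ) : k)) * X^(m-1) := by
  obtain ⟨m', rfl⟩ : ∃ m', m = m' + 1 := ⟨m-1, (Nat.succ_pred_eq_of_pos hm).symm⟩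
  have h2 : ∀ c : k, (C (Polynomial.C c) : Polynomial (Polynomial k)) = algebraMap k _ c := by
    intro c; simp [Polynomial.algebraMap_apply]
  rw [F, map_add, Derivation.leibniz, Derivation.leibniz_pow, Derivation.leibniz,
    Derivation.leibniz_pow, hdx, hdy, h2, h2, Derivation.map_algebraMap,
    Derivation.map_algebraMap, h2]
  simp only [smul_zero, smul_eq_mul, nsmul_eq_mul, Nat.add_sub_cancel, map_natCast]
  push_cast
  ring

lemma d_F_pow (hm : 1 ≤ m) (hdx : d (C X) = X^m) (hdy : d X = 1 - (C X)^α * X) (s : ℕ) :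
    d ((F k m α)^s) = C (Polynomial.C ((s*(m*(α+1)) : ℕ) : k)) * (F k m α)^(s-1) * X^(m-1) := by
  rw [Derivation.leibniz_pow, d_F hm hdx hdy]
  have h2 : ∀ c : k, (C (Polynomial.C c) : Polynomial (Polynomial k)) = algebraMap k _ c := by
    intro c; simp [Polynomial.algebraMap_apply]
  simp only [smul_eq_mul, nsmul_eq_mul, h2, map_natCast]
  push_cast
  ring

/-- right-hand side of the generalized equation -/
noncomputable def Rhs (k : Type*) [Field k] (m α : ℕ) (a b : k) (Q : Polynomial k) :
    Polynomial (Polynomial k) :=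
  C (Polynomial.C a) * C X + C (Polynomial.C b) + aeval (F k m α) Q * X^(m-1)

lemma dc_CC (c : k) (i j : ℕ) :
    dc (C (Polynomial.C c) : Polynomial (Polynomial k)) i j
      = if i = 0 ∧ j = 0 then c else 0 := by
  unfold dc
  rw [coeff_C]
  by_cases hj : j = 0
  · subst hj
    rw [if_pos rfl, coeff_C]
    by_cases hi : i = 0
    · rw [if_pos hi, if_pos ⟨hi, rfl⟩]
    · rw [if_neg hi, if_neg (by tauto)]
  · rw [if_neg hj, coeff_zero, if_neg (by tauto)]

lemma dc_Rhs (a b : k) (Q : Polynomial k) (i j : ℕ) :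
    dc (Rhs k m α a b Q) i j
      = (if i = 1 ∧ j = 0 then a else 0) + (if i = 0 ∧ j = 0 then b else 0)
        + dc (aeval (F k m α) Q * X^(m-1)) i j := by
  rw [Rhs, dc_add, dc_add]
  congr 2
  · have : (C (Polynomial.C a) * C X : Polynomial (Polynomial k)) = C (Polynomial.C a * X) := by
      rw [map_mul]
    rw [this]
    unfold dc
    rw [coeff_C]
    by_cases hj : j = 0
    · subst hj
      rw [if_pos rfl, coeff_C_mul, coeff_X]
      by_cases hi : 1 = i
      · rw [if_pos hi, if_pos ⟨hi.symm, rfl⟩, mul_one]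
      · rw [if_neg hi, if_neg (by tauto), mul_zero]
    · rw [if_neg hj, coeff_zero, if_neg (by tauto)]
  · exact dc_CC b i j

lemma wtB_Qterm (Q : Polynomial k) :
    WtB m α ((α+1)*(m*Q.natDegree + (m-1))) (aeval (F k m α) Q * X^(m-1)) := by
  have h1 : WtB m α (Q.natDegree*(m*(α+1))) (aeval (F k m α) Q) := by
    rw [aeval_eq_sum_range]
    apply wtB_finsetSum
    intro e he
    have he' : e ≤ Q.natDegree := Nat.lt_succ_iff.mp (Finset.mem_range.mp he)
    have := ((wtB_F_pow m α e).smul (Q.coeff e)).mono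
      (Nat.mul_le_mul_right _ he')
    simpa [smul_smul] using this
  have h2 : WtB m α ((m-1)*(α+1)) ((X : Polynomial (Polynomial k))^(m-1)) :=
    (wtB_X m α).pow (m-1)
  exact (h1.mul h2).mono (by ring_nf; omega)

lemma dc_Qterm_lowj (hm : 2 ≤ m) (Q : Polynomial k) (i : ℕ) :
    dc (aeval (F k m α) Q * X^(m-1)) i 0 = 0 := by
  unfold dc
  rw [coeff_mul_X_pow', if_neg (by omega), coeff_zero]

lemma dc_Qterm_chain (hm : 1 ≤ m) (Q : Polynomial k) {t : ℕ} (ht : t ≤ Q.natDegree) :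
    dc (aeval (F k m α) Q * X^(m-1)) ((α+1)*(Q.natDegree - t)) (t*m + (m-1))
      = Q.coeff Q.natDegree * ((Q.natDegree.choose t * m^(Q.natDegree-t) * (α+1)^t : ℕ) : k) := by
  set e := Q.natDegree with he
  have h1 : dc (aeval (F k m α) Q * X^(m-1)) ((α+1)*(e - t)) (t*m + (m-1))
      = dc (aeval (F k m α) Q) ((α+1)*(e - t)) (t*m) := by
    unfold dc
    rw [coeff_mul_X_pow', if_pos (by omega), Nat.add_sub_cancel]
  rw [h1, aeval_eq_sum_range, dc_sum]
  rw [Finset.sum_eq_single e]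
  · rw [dc_smul, dc_F_pow_pat m α hm ht]
  · intro e' he' hne
    have he'' : e' ≤ e := Nat.lt_succ_iff.mp (Finset.mem_range.mp he')
    rw [dc_smul, dc_F_pow_ne m α hm, mul_zero]
    intro t' ht' hc
    obtain ⟨hc1, hc2⟩ := hc
    have htt : t' = t := Nat.eq_of_mul_eq_mul_right hm hc1.symm
    subst htt
    have : e - t' = e' - t' := Nat.eq_of_mul_eq_mul_left (by omega) hc2
    omega
  · intro hc
    exact absurd (Finset.mem_range.mpr (by omega)) hc

section Kernel

variable {r : Polynomial (Polynomial k)} {W : ℕ}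

/-- descent along a chain: a nonzero coefficient on the line W forces a nonzero
coefficient at the bottom of its chain -/
lemma kdesc (hm : 2 ≤ m) (hα : 1 ≤ α)
    (HE : ∀ i j : ℕ, m*i + (α+1)*j = W + m*α →
      (if m ≤ j then dc r (i+1) (j-m) * ((i:k)+1) else 0)
        = (if α ≤ i then dc r (i-α) j * (j:k) else 0)) :
    ∀ q p, m*p + (α+1)*q = W → dc r p q ≠ 0 →
      m ∣ q ∧ dc r (p + (α+1)*(q/m)) 0 ≠ 0 := by
  intro q
  induction q using Nat.strong_induction_on with
  | _ q IH =>
    intro p hline hne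
    rcases Nat.eq_zero_or_pos q with rfl | hq
    · constructor
      · exact dvd_zero m
      · simpa using hne
    · have e1 : m*(p+α) = m*p + m*α := by ring
      have hl2 : m*(p+α) + (α+1)*q = W + m*α := by omega
      have heq := HE (p+α) q hl2
      rw [if_pos (Nat.le_add_left α p), Nat.add_sub_cancel] at heq
      have hrhs : dc r p q * (q:k) ≠ 0 :=
        mul_ne_zero hne (Nat.cast_ne_zero.mpr (by omega))
      rw [← heq] at hrhs
      by_cases hmq : m ≤ q
      · obtain ⟨q', rfl⟩ : ∃ q', q = q' + m := ⟨q - m, by omega⟩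
        rw [if_pos hmq, Nat.add_sub_cancel] at hrhs
        have hne2 : dc r (p+α+1) q' ≠ 0 := fun h => hrhs (by rw [h, zero_mul])
        have hl3 : m*(p+α+1) + (α+1)*q' = W := by
          have e2 : m*(p+α+1) = m*p + m*α + m := by ring
          have e3 : (α+1)*(q'+m) = (α+1)*q' + m*α + m := by ring
          omega
        obtain ⟨hdvd, hbot⟩ := IH q' (by omega) (p+α+1) hl3 hne2
        constructor
        · exact dvd_add hdvd (dvd_refl m)
        · have e4 : (q'+m)/m = q'/m + 1 := Nat.add_div_right q' (by omega)
          have e5 : p + (α+1)*((q'+m)/m) = p+α+1 + (α+1)*(q'/m) := by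
            rw [e4]; ring
          rw [e5]
          exact hbot
      · rw [if_neg hmq] at hrhs
        exact absurd rfl hrhs

/-- climbing a chain: a nonzero coefficient on the line forces (α+1) ∣ (x-degree) -/
lemma kclimb (hm : 2 ≤ m) (hα : 1 ≤ α)
    (HE : ∀ i j : ℕ, m*i + (α+1)*j = W + m*α →
      (if m ≤ j then dc r (i+1) (j-m) * ((i:k)+1) else 0)
        = (if α ≤ i then dc r (i-α) j * (j:k) else 0)) :
    ∀ p q, m*p + (α+1)*q = W → dc r p q ≠ 0 → (α+1) ∣ p := by
  intro p
  induction p using Nat.strong_induction_on with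
  | _ p IH =>
    intro q hline hne
    rcases Nat.eq_zero_or_pos p with rfl | hp
    · exact dvd_zero _
    · obtain ⟨p', rfl⟩ : ∃ p', p = p' + 1 := ⟨p - 1, by omega⟩
      have hl2 : m*p' + (α+1)*(q+m) = W + m*α := by
        have e1 : (α+1)*(q+m) = (α+1)*q + m*α + m := by ring
        have e2 : m*(p'+1) = m*p' + m := by ring
        omega
      have heq := HE p' (q+m) hl2
      rw [if_pos (Nat.le_add_left m q), Nat.add_sub_cancel] at heq
      have hlhs : dc r (p'+1) q * ((p':k)+1) ≠ 0 :=
        mul_ne_zero hne (by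
          have : ((p':k)+1) = ((p'+1 : ℕ) : k) := by push_cast; ring
          rw [this]
          exact Nat.cast_ne_zero.mpr (by omega))
      rw [heq] at hlhs
      by_cases hαp : α ≤ p'
      · rw [if_pos hαp] at hlhs
        have hne2 : dc r (p'-α) (q+m) ≠ 0 := fun h => hlhs (by rw [h, zero_mul])
        obtain ⟨p'', rfl⟩ : ∃ p'', p' = p'' + α := ⟨p' - α, by omega⟩
        rw [Nat.add_sub_cancel] at hne2
        have hl3 : m*p'' + (α+1)*(q+m) = W := by
          have e1 : (α+1)*(q+m) = (α+1)*q + m*α + m := by ring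
          have e2 : m*(p''+α+1) = m*p'' + m*α + m := by ring
          omega
        have hd := IH p'' (by omega) (q+m) hl3 hne2
        obtain ⟨u, rfl⟩ := hd
        exact ⟨u+1, by ring⟩
      · rw [if_neg hαp] at hlhs
        exact absurd rfl hlhs

end Kernel

/-- Kernel lemma: the top weighted-line of r is a multiple of the pattern of F^s -/
lemma kernel (hm : 2 ≤ m) (hα : 1 ≤ α) {r : Polynomial (Polynomial k)} {W : ℕ} (hW : 1 ≤ W)
    (HE : ∀ i j : ℕ, m*i + (α+1)*j = W + m*α →
      (if m ≤ j then dc r (i+1) (j-m) * ((i:k)+1) else 0)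
        = (if α ≤ i then dc r (i-α) j * (j:k) else 0)) :
    (∀ i j, m*i + (α+1)*j = W → dc r i j = 0) ∨
    (∃ s c, 1 ≤ s ∧ W = s*(m*(α+1)) ∧
      ∀ i j, m*i + (α+1)*j = W → dc r i j = c * dc ((F k m α)^s) i j) := by
  by_cases hz : ∀ i j, m*i + (α+1)*j = W → dc r i j = 0
  · exact Or.inl hz
  · right
    push_neg at hz
    obtain ⟨p₀, q₀, hline₀, hne₀⟩ := hz
    obtain ⟨hdvd, hbot⟩ := kdesc hm hα HE q₀ p₀ hline₀ hne₀
    set P₀ := p₀ + (α+1)*(q₀/m) with hP₀def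
    have hlineP : m*P₀ = W := by
      have h2 : m*(q₀/m) = q₀ := Nat.mul_div_cancel' hdvd
      have h1 : m*P₀ = m*p₀ + (α+1)*(m*(q₀/m)) := by rw [hP₀def]; ring
      rw [h2] at h1
      omega
    have hdvd2 : (α+1) ∣ P₀ := kclimb hm hα HE P₀ 0 (by omega) hbot
    set s := P₀/(α+1) with hsdef
    have hP₀ : P₀ = (α+1)*s := (Nat.mul_div_cancel' hdvd2).symm
    have hWs : W = s*(m*(α+1)) := by
      have h4 : m*((α+1)*s) = W := by rw [← hP₀]; exact hlineP
      have h5 : m*((α+1)*s) = s*(m*(α+1)) := by ring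
      omega
    have hs1 : 1 ≤ s := by
      rcases Nat.eq_zero_or_pos s with hs0 | h
      · exfalso; rw [hs0] at hWs; simp at hWs; omega
      · exact h
    set c : k := dc r P₀ 0 / ((m^s : ℕ) : k) with hcdef
    have hmsne : ((m^s : ℕ) : k) ≠ 0 := Nat.cast_ne_zero.mpr (by positivity)
    -- chain values
    have key : ∀ t, t ≤ s →
        dc r ((α+1)*(s-t)) (t*m) = c * ((s.choose t * m^(s-t) * (α+1)^t : ℕ) : k) := by
      intro t
      induction t with
      | zero =>
          intro _
          simp only [Nat.sub_zero, Nat.mul_zero, Nat.zero_mul, Nat.choose_zero_right,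
            Nat.pow_zero, Nat.one_mul, Nat.mul_one]
          rw [← hP₀, hcdef]
          rw [div_mul_cancel₀ _ hmsne]
      | succ t IH =>
          intro hts
          have hIH := IH (by omega)
          have hl : m*((α+1)*(s-(t+1))+α) + (α+1)*((t+1)*m) = W + m*α := by
            have e1 : m*((α+1)*(s-(t+1))+α) + (α+1)*((t+1)*m)
                = m*(α+1)*((s-(t+1))+(t+1)) + m*α := by ring
            have e2 : (s-(t+1))+(t+1) = s := by omega
            rw [e2] at e1
            have e3 : m*(α+1)*s = s*(m*(α+1)) := by ring
            omega
          have heq := HE ((α+1)*(s-(t+1))+α) ((t+1)*m) hl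
          rw [if_pos (Nat.le_mul_of_pos_left m (Nat.succ_pos t)),
            if_pos (Nat.le_add_left α _), Nat.add_sub_cancel] at heq
          have ec1 : (α+1)*(s-(t+1))+α+1 = (α+1)*(s-t) := by
            have e4 : s - t = (s-(t+1)) + 1 := by omega
            rw [e4]; ring
          have ec2 : (t+1)*m - m = t*m := by
            have : (t+1)*m = t*m + m := by ring
            omega
          rw [ec1, ec2, hIH] at heq
          have hnat : (s.choose t * m^(s-t) * (α+1)^t) * ((α+1)*(s-(t+1))+α+1)
              = (s.choose (t+1) * m^(s-(t+1)) * (α+1)^(t+1)) * ((t+1)*m) := by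
            rw [ec1]
            have e4 : s - t = (s - (t+1)) + 1 := by omega
            have e5 : m^(s-t) = m^(s-(t+1)) * m := by rw [e4, pow_succ]
            have e6 : s.choose (t+1) * (t+1) = s.choose t * (s - t) := Nat.choose_succ_right_eq s t
            calc s.choose t * m^(s-t) * (α+1)^t * ((α+1)*(s-t))
                = (s.choose t * (s-t)) * (m^(s-(t+1)) * m) * ((α+1)^t * (α+1)) := by
                  rw [e5]; ring
              _ = (s.choose (t+1) * (t+1)) * (m^(s-(t+1)) * m) * (α+1)^(t+1) := by
                  rw [← e6, pow_succ]
              _ = s.choose (t+1) * m^(s-(t+1)) * (α+1)^(t+1) * ((t+1)*m) := by ring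
          have hBne : (((t+1)*m : ℕ):k) ≠ 0 := Nat.cast_ne_zero.mpr (by positivity)
          have ecast : ((((α+1)*(s-(t+1))+α : ℕ)):k) + 1 = (((α+1)*(s-(t+1))+α+1 : ℕ):k) := by
            push_cast; ring
          apply mul_right_cancel₀ hBne
          rw [← heq, ecast]
          calc c * ((s.choose t * m ^ (s - t) * (α + 1) ^ t : ℕ) : k)
                * (((α+1)*(s-(t+1))+α+1 : ℕ) : k)
              = c * ((s.choose t * m ^ (s - t) * (α + 1) ^ t * ((α+1)*(s-(t+1))+α+1) : ℕ) : k) := by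
                push_cast; ring
            _ = c * ((s.choose (t+1) * m ^ (s-(t+1)) * (α+1)^(t+1) * ((t+1)*m) : ℕ) : k) := by
                rw [hnat]
            _ = c * ((s.choose (t+1) * m ^ (s-(t+1)) * (α+1)^(t+1) : ℕ) : k)
                * (((t+1)*m : ℕ) : k) := by
                push_cast; ring
    -- conclusion
    refine ⟨s, c, hs1, hWs, ?_⟩
    intro i j hline
    by_cases hij : ∃ t, t ≤ s ∧ j = t*m ∧ i = (α+1)*(s-t)
    · obtain ⟨t, hts, rfl, rfl⟩ := hij
      rw [key t hts, dc_F_pow_pat m α (by omega) hts]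
    · have h0 : dc r i j = 0 := by
        by_contra hne
        obtain ⟨hdj, hbj⟩ := kdesc hm hα HE j i hline hne
        have hj : j = (j/m)*m := by
          rw [Nat.div_mul_cancel hdj]
        have hlb : m*(i + (α+1)*(j/m)) = W := by
          have h2 : m*(j/m) = j := Nat.mul_div_cancel' hdj
          have h1 : m*(i + (α+1)*(j/m)) = m*i + (α+1)*(m*(j/m)) := by ring
          rw [h2] at h1
          omega
        have hPeq : i + (α+1)*(j/m) = P₀ :=
          Nat.eq_of_mul_eq_mul_left (by omega) (hlb.trans hlineP.symm)
        have hts : j/m ≤ s := by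
          have h3 : (α+1)*(j/m) ≤ (α+1)*s := by omega
          exact Nat.le_of_mul_le_mul_left h3 (by omega)
        have hieq : i = (α+1)*(s - (j/m)) := by
          have e7 : (α+1)*(s-(j/m)) + (α+1)*(j/m) = (α+1)*s := by
            rw [← Nat.left_distrib]
            congr 1
            omega
          omega
        exact hij ⟨j/m, hts, hj, hieq⟩
      push_neg at hij
      rw [h0, dc_F_pow_ne m α (by omega), mul_zero]
      intro t hts hc
      exact hij t hts hc.1 hc.2

lemma telescope {e : ℕ} (A B w : ℕ → ℕ) (v : ℕ → k) (γp : ℕ → k)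
    (hkey : ∀ t, t < e → w (t+1) * A (t+1) = w t * B t)
    (hEt : ∀ t, t ≤ e →
      (if 1 ≤ t then v (t-1) * ((A t : ℕ):k) else 0)
        - (if t < e then v t * ((B t : ℕ):k) else 0) = γp t) :
    ∑ t ∈ range (e+1), (w t : k) * γp t = 0 := by
  have hs : ∀ t ∈ range (e+1), (w t:k) * γp t
      = (w t:k)*(if 1 ≤ t then v (t-1) * ((A t : ℕ):k) else 0)
        - (w t:k)*(if t < e then v t * ((B t : ℕ):k) else 0) := by
    intro t ht
    rw [← hEt t (Nat.lt_succ_iff.mp (Finset.mem_range.mp ht))]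
    ring
  rw [Finset.sum_congr rfl hs, Finset.sum_sub_distrib]
  have hfst : ∑ t ∈ range (e+1), (w t:k) * (if 1 ≤ t then v (t-1) * ((A t : ℕ):k) else 0)
      = ∑ u ∈ range e, (w (u+1):k) * (v u * ((A (u+1) : ℕ):k)) := by
    rw [Finset.sum_range_succ']
    simp
  have hsnd : ∑ t ∈ range (e+1), (w t:k) * (if t < e then v t * ((B t : ℕ):k) else 0)
      = ∑ t ∈ range e, (w t:k) * (v t * ((B t : ℕ):k)) := by
    rw [Finset.sum_range_succ]
    rw [if_neg (lt_irrefl e), mul_zero, add_zero]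
    exact Finset.sum_congr rfl fun t ht => by rw [if_pos (Finset.mem_range.mp ht)]
  rw [hfst, hsnd, ← Finset.sum_sub_distrib]
  apply Finset.sum_eq_zero
  intro u hu
  have hc : ((w (u+1) * A (u+1) : ℕ) : k) = ((w u * B u : ℕ):k) := by
    exact_mod_cast congrArg (fun n : ℕ => (n : k)) (hkey u (Finset.mem_range.mp hu))
  push_cast at hc
  linear_combination v u * hc

/-- the positive integer weights for the telescoping sum -/
def Acok (α e t : ℕ) : ℕ := (α+1)*(e-t)+1
def Bcok (m t : ℕ) : ℕ := t*m+(m-1)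
def wcok (m α e t : ℕ) : ℕ :=
  (∏ u ∈ range t, Bcok m u) * (∏ u ∈ range (e-t), Acok α e (t+1+u))

lemma wcok_key {e t : ℕ} (hm : 2 ≤ m) (ht : t < e) :
    wcok m α e (t+1) * Acok α e (t+1) = wcok m α e t * Bcok m t := by
  unfold wcok
  have h1 : ∏ u ∈ range (t+1), Bcok m u = (∏ u ∈ range t, Bcok m u) * Bcok m t :=
    Finset.prod_range_succ _ t
  have h2 : ∏ u ∈ range (e-t), Acok α e (t+1+u)
      = (∏ u ∈ range (e-(t+1)), Acok α e (t+2+u)) * Acok α e (t+1) := by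
    have he : e - t = (e-(t+1)) + 1 := by omega
    rw [he, Finset.prod_range_succ']
    congr 1
    refine Finset.prod_congr rfl fun u hu => ?_
    congr 1
    omega
  rw [h1, h2]
  ring

lemma wcok_pos {e t : ℕ} (hm : 2 ≤ m) : 0 < wcok m α e t := by
  unfold wcok
  apply Nat.mul_pos
  · apply Finset.prod_pos
    intro u hu
    unfold Bcok
    omega
  · apply Finset.prod_pos
    intro u hu
    unfold Acok
    omega

/-- Cokernel lemma: if Q ≠ 0 sits too high compared to W, contradiction -/
lemma cok (hm : 2 ≤ m) (hα : 1 ≤ α) {r : Polynomial (Polynomial k)} {W : ℕ} {a b : k}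
    {Q : Polynomial k} (hQ : Q ≠ 0) (HB : WtB m α W r)
    (hge : W + m*α ≤ (α+1)*(m*Q.natDegree + (m-1)))
    (HEq : Weq m α r (Rhs k m α a b Q)) : False := by
  set e := Q.natDegree with he
  have hγ : Q.coeff e ≠ 0 := by
    rw [he]
    exact Polynomial.leadingCoeff_ne_zero.mpr hQ
  -- the chain equations
  have hEt : ∀ t, t ≤ e →
      (if 1 ≤ t then (fun u => dc r ((α+1)*(e-(u+1))+1) (u*m+(m-1))) (t-1)
          * ((Acok α e t : ℕ):k) else 0)
        - (if t < e then (fun u => dc r ((α+1)*(e-(u+1))+1) (u*m+(m-1))) t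
          * ((Bcok m t : ℕ):k) else 0)
      = Q.coeff e * ((e.choose t * m^(e-t) * (α+1)^t : ℕ):k) := by
    intro t ht
    have heq := HEq ((α+1)*(e-t)) (t*m+(m-1))
    -- the middle term vanishes
    have hVline : m*((α+1)*(e-t)) + (α+1)*(t*m+(m-1)) = (α+1)*(m*e + (m-1)) := by
      have e1 : m*((α+1)*(e-t)) + (α+1)*(t*m+(m-1))
          = (α+1)*(m*(e-t) + m*t + (m-1)) := by ring
      have e2 : m*(e-t) + m*t = m*e := by
        rw [← Nat.left_distrib]
        congr 1
        omega
      rw [e1, show m*(e-t) + m*t + (m-1) = m*e+(m-1) by omega]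
    have hT2 : dc r ((α+1)*(e-t)) (t*m+(m-1)+1) = 0 := by
      apply HB
      have e3 : m*((α+1)*(e-t)) + (α+1)*(t*m+(m-1)+1)
          = m*((α+1)*(e-t)) + (α+1)*(t*m+(m-1)) + (α+1) := by ring
      omega
    rw [hT2, zero_mul, add_zero] at heq
    -- the right-hand side
    have hrhs : dc (Rhs k m α a b Q) ((α+1)*(e-t)) (t*m+(m-1))
        = Q.coeff e * ((e.choose t * m^(e-t) * (α+1)^t : ℕ):k) := by
      rw [dc_Rhs, if_neg (by omega), if_neg (by omega), zero_add, zero_add]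
      exact dc_Qterm_chain (by omega) Q ht
    rw [hrhs] at heq
    rw [← heq]
    congr 1
    -- first terms match
    · rcases Nat.eq_zero_or_pos t with rfl | ht1
      · rw [if_neg (by omega), if_neg (by omega)]
      · obtain ⟨t', rfl⟩ : ∃ t', t = t' + 1 := ⟨t - 1, by omega⟩
        rw [if_pos (by omega), if_pos (by
          have : (t'+1)*m = t'*m + m := by ring
          omega)]
        have ej : t'*m+(m-1) = (t'+1)*m+(m-1)-m := by
          have : (t'+1)*m = t'*m + m := by ring
          omega
        have ecast : (((Acok α e (t'+1) : ℕ)):k) = (((α+1)*(e-(t'+1)) : ℕ):k) + 1 := by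
          unfold Acok
          push_cast
          ring
        rw [ecast, ← ej]
        rfl
    -- second terms match
    · rcases Nat.lt_or_ge t e with ht2 | ht2
      · rw [if_pos ht2, if_pos (by
          have : (α+1)*(e-t) = (α+1)*(e-(t+1)) + (α+1) := by
            rw [show e-t = (e-(t+1))+1 by omega]; ring
          omega)]
        have ei : (α+1)*(e-t) - α = (α+1)*(e-(t+1))+1 := by
          have : (α+1)*(e-t) = (α+1)*(e-(t+1)) + (α+1) := by
            rw [show e-t = (e-(t+1))+1 by omega]; ring
          omega
        rw [ei]
        unfold Bcok
        rfl
      · have hte : t = e := by omega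
        rw [if_neg (by omega), if_neg (by
          subst hte
          simp
          omega)]
  -- telescope
  have hzero := telescope (Acok α e) (Bcok m) (wcok m α e)
    (fun u => dc r ((α+1)*(e-(u+1))+1) (u*m+(m-1)))
    (fun t => Q.coeff e * ((e.choose t * m^(e-t) * (α+1)^t : ℕ):k))
    (fun t ht => wcok_key hm ht)
    hEt
  -- but the sum is γ * (positive)
  have hpos : 0 < ∑ t ∈ range (e+1), wcok m α e t * (e.choose t * m^(e-t) * (α+1)^t) := by
    apply Finset.sum_pos
    · intro t ht
      apply Nat.mul_pos (wcok_pos hm)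
      have : 0 < e.choose t := Nat.choose_pos (Nat.lt_succ_iff.mp (Finset.mem_range.mp ht))
      positivity
    · exact ⟨0, Finset.mem_range.mpr (by omega)⟩
  have hsum : ∑ t ∈ range (e+1), (wcok m α e t : k)
      * (Q.coeff e * ((e.choose t * m^(e-t) * (α+1)^t : ℕ):k))
      = Q.coeff e * ((∑ t ∈ range (e+1), wcok m α e t * (e.choose t * m^(e-t) * (α+1)^t) : ℕ):k) := by
    rw [Nat.cast_sum, Finset.mul_sum]
    refine Finset.sum_congr rfl fun t ht => ?_
    push_cast
    ring
  rw [hsum] at hzero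
  have : Q.coeff e = 0 := by
    rcases mul_eq_zero.mp hzero with h | h
    · exact h
    · exact absurd h (Nat.cast_ne_zero.mpr (by omega))
  exact hγ this

lemma const_of_wtB0 (hm : 1 ≤ m) {r : Polynomial (Polynomial k)} (h : WtB m α 0 r) :
    r = C (Polynomial.C (dc r 0 0)) := by
  apply Polynomial.ext
  intro j
  apply Polynomial.ext
  intro i
  have hCC := dc_CC (k := k) (dc r 0 0) i j
  rw [dc] at hCC
  rw [hCC]
  by_cases hij : i = 0 ∧ j = 0
  · obtain ⟨rfl, rfl⟩ := hij
    rw [if_pos ⟨rfl, rfl⟩, dc]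
  · rw [if_neg hij]
    have h1 : i ≤ m*i := Nat.le_mul_of_pos_left i (by omega)
    have h2 : j ≤ (α+1)*j := Nat.le_mul_of_pos_left j (by omega)
    exact h i j (by omega)

lemma d_const (c : k) : d (C (Polynomial.C c)) = 0 := by
  have h2 : (C (Polynomial.C c) : Polynomial (Polynomial k)) = algebraMap k _ c := by
    simp [Polynomial.algebraMap_apply]
  rw [h2, Derivation.map_algebraMap]

lemma rhs_zero (hm : 2 ≤ m) {a b : k} {Q : Polynomial k} (h : Rhs k m α a b Q = 0) :
    a = 0 ∧ b = 0 ∧ Q = 0 := by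
  have hdc : ∀ i j, dc (Rhs k m α a b Q) i j = 0 := by
    intro i j
    rw [h, dc]
    simp
  refine ⟨?_, ?_, ?_⟩
  · have := hdc 1 0
    rw [dc_Rhs, if_pos ⟨rfl, rfl⟩, if_neg (by omega), dc_Qterm_lowj hm] at this
    simpa using this
  · have := hdc 0 0
    rw [dc_Rhs, if_neg (by omega), if_pos ⟨rfl, rfl⟩, dc_Qterm_lowj hm] at this
    simpa using this
  · by_contra hQ
    set e := Q.natDegree with he
    have hγ : Q.coeff e ≠ 0 := Polynomial.leadingCoeff_ne_zero.mpr hQ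
    have := hdc ((α+1)*(e-e)) (e*m+(m-1))
    rw [dc_Rhs, if_neg (by omega), if_neg (by omega), zero_add, zero_add,
      dc_Qterm_chain (by omega) Q (le_refl e)] at this
    rcases mul_eq_zero.mp this with h' | h'
    · exact hγ h'
    · refine absurd h' (Nat.cast_ne_zero.mpr ?_)
      have h1 : 0 < e.choose e := Nat.choose_pos (le_refl e)
      positivity

theorem main (hm : 2 ≤ m) (hα : 1 ≤ α)
    (hdx : d (C X) = X^m) (hdy : d X = 1 - (C X)^α * X) :
    ∀ W : ℕ, ∀ r : Polynomial (Polynomial k), ∀ a b : k, ∀ Q : Polynomial k,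
      WtB m α W r → d r = Rhs k m α a b Q →
      a = 0 ∧ b = 0 ∧ ∃ P : Polynomial k, r = aeval (F k m α) P
        ∧ Q = Polynomial.C (((m*(α+1)) : ℕ) : k) * derivative P := by
  intro W
  induction W using Nat.strong_induction_on with
  | _ W IH =>
    intro r a b Q HB hr
    rcases Nat.eq_zero_or_pos W with rfl | hW
    · -- base case : r is a constant
      have hrc : r = C (Polynomial.C (dc r 0 0)) := const_of_wtB0 (by omega) HB
      have hd0 : d r = 0 := by rw [hrc, d_const]
      obtain ⟨ha, hb, hQ⟩ := rhs_zero hm (by rw [← hr, hd0])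
      refine ⟨ha, hb, Polynomial.C (dc r 0 0), ?_, ?_⟩
      · rw [aeval_C]
        conv_lhs => rw [hrc]
        simp [Polynomial.algebraMap_apply]
      · rw [hQ, derivative_C, mul_zero]
    · -- inductive step
      by_cases hcase : Q ≠ 0 ∧ W + m*α ≤ (α+1)*(m*Q.natDegree + (m-1))
      · exact (cok hm hα hcase.1 HB hcase.2 (weq_of hdx hdy hr)).elim
      · have hrhs0 : ∀ i j, m*i + (α+1)*j = W + m*α → dc (Rhs k m α a b Q) i j = 0 := by
          intro i j hij
          have hma : m ≤ m*α := Nat.le_mul_of_pos_right m (by omega)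
          rw [dc_Rhs]
          rw [if_neg (by rintro ⟨rfl, rfl⟩; omega), if_neg (by rintro ⟨rfl, rfl⟩; omega),
            zero_add, zero_add]
          by_cases hQ0 : Q = 0
          · rw [hQ0]
            simp [dc]
          · push_neg at hcase
            exact wtB_Qterm Q i j (by have := hcase hQ0; omega)
        have HE : ∀ i j : ℕ, m*i + (α+1)*j = W + m*α →
            (if m ≤ j then dc r (i+1) (j-m) * ((i:k)+1) else 0)
              = (if α ≤ i then dc r (i-α) j * (j:k) else 0) := by
          intro i j hij
          have heq := weq_of hdx hdy hr i j
          have hT2 : dc r i (j+1) = 0 := by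
            apply HB
            have e1 : (α+1)*(j+1) = (α+1)*j + α + 1 := by ring
            omega
          rw [hT2, zero_mul, add_zero, hrhs0 i j hij] at heq
          exact sub_eq_zero.mp heq
        rcases kernel hm hα hW HE with hline0 | ⟨s, c, hs1, hWs, hlc⟩
        · have HB' : WtB m α (W-1) r := by
            intro i j hij
            rcases Nat.lt_or_ge W (m*i + (α+1)*j) with h | h
            · exact HB i j h
            · exact hline0 i j (by omega)
          exact IH (W-1) (by omega) r a b Q HB' hr
        · -- subtract c • F^s
          have HB' : WtB m α (W-1) (r - c • (F k m α)^s) := by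
            intro i j hij
            rw [dc_sub, dc_smul]
            rcases Nat.lt_or_ge W (m*i + (α+1)*j) with h | h
            · rw [HB i j h, wtB_F_pow m α s i j (by omega), mul_zero, sub_zero]
            · have hline : m*i + (α+1)*j = W := by omega
              rw [hlc i j hline]
              ring
          have hCsmul : ∀ (c' : k) (G : Polynomial (Polynomial k)),
              C (Polynomial.C c') * G = c' • G := by
            intro c' G
            have h2 : (C (Polynomial.C c') : Polynomial (Polynomial k)) = algebraMap k _ c' := by
              simp [Polynomial.algebraMap_apply]
            rw [h2, ← Algebra.smul_def]
          have halg : ∀ x : k, algebraMap k (Polynomial (Polynomial k)) x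
              = C (Polynomial.C x) := by
            intro x
            simp [Polynomial.algebraMap_apply]
          have hQ' : d (r - c • (F k m α)^s)
              = Rhs k m α a b (Q - Polynomial.C (c * ((s*(m*(α+1)) : ℕ):k)) * X^(s-1)) := by
            rw [map_sub, hr, Derivation.map_smul, d_F_pow (by omega) hdx hdy s]
            have hsm : c • (C (Polynomial.C ((s*(m*(α+1)) : ℕ):k)) * (F k m α)^(s-1) * X^(m-1))
                = C (Polynomial.C (c * ((s*(m*(α+1)) : ℕ):k))) * ((F k m α)^(s-1) * X^(m-1)) := by
              rw [map_mul Polynomial.C, map_mul C, ← hCsmul c]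
              ring
            simp only [Rhs]
            rw [map_sub, map_mul, aeval_C, map_pow, aeval_X, halg, hsm]
            ring
          obtain ⟨ha, hb, P', hP', hQP'⟩ := IH (W-1) (by omega) _ a b _ HB' hQ'
          refine ⟨ha, hb, P' + Polynomial.C c * X^s, ?_, ?_⟩
          · rw [map_add, ← hP', map_mul, aeval_C, map_pow, aeval_X]
            rw [Polynomial.algebraMap_apply, Polynomial.algebraMap_apply, Algebra.algebraMap_self_apply]
            rw [hCsmul]
            ring
          · have hcc : Polynomial.C (((m*(α+1)) : ℕ):k) * (Polynomial.C (c * (s:k)) * X^(s-1))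
                = Polynomial.C (c * ((s*(m*(α+1)) : ℕ):k)) * X^(s-1) := by
              rw [← mul_assoc, ← map_mul]
              congr 2
              push_cast
              ring
            rw [derivative_add, derivative_C_mul_X_pow, mul_add, hcc]
            rw [← hQP']
            ring

end Stmt0Aux

open Stmt0Aux in
/-- Let `k` be a field of characteristic zero, `R = k[x,y]`
(realized as `Polynomial (Polynomial k)`, with `x = C X` and `y = X`), and
`d` the `k`-derivation with `d x = y ^ m`, `d y = 1 - x ^ α * y`, where
`m ≥ 2` and `α ≥ 1`. If `d r = a x + b` for some `a b : k`, then `r` is a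
constant and `a = b = 0`. -/
theorem stmt0 (k : Type*) [Field k] [CharZero k] (m α : ℕ) (hm : 2 ≤ m) (hα : 1 ≤ α)
    (d : Derivation k (Polynomial (Polynomial k)) (Polynomial (Polynomial k)))
    (hdx : d (C X) = X ^ m)
    (hdy : d X = 1 - (C X) ^ α * X)
    (r : Polynomial (Polynomial k)) (a b : k)
    (hr : d r = C (Polynomial.C a) * C X + C (Polynomial.C b)) :
    (∃ c : k, r = C (Polynomial.C c)) ∧ a = 0 ∧ b = 0 := by
  obtain ⟨W, HB⟩ := exists_wtB m α r
  have hr' : d r = Rhs k m α a b 0 := by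
    rw [hr]
    simp [Rhs]
  obtain ⟨ha, hb, P, hP, hQP⟩ := main hm hα hdx hdy W r a b 0 HB hr'
  have hdP : derivative P = 0 := by
    rcases mul_eq_zero.mp hQP.symm with h | h
    · exfalso
      have : (((m*(α+1)) : ℕ):k) ≠ 0 := Nat.cast_ne_zero.mpr (by positivity)
      exact this (Polynomial.C_eq_zero.mp h)
    · exact h
  have hPd : P.natDegree = 0 := Polynomial.natDegree_eq_zero_of_derivative_eq_zero hdP
  have hPC : P = Polynomial.C (P.coeff 0) := (Polynomial.eq_C_of_natDegree_eq_zero hPd)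
  refine ⟨⟨P.coeff 0, ?_⟩, ha, hb⟩
  rw [hP, hPC, aeval_C]
  simp [Polynomial.algebraMap_apply]
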